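/- Soliton solutions of the trilinear system: let X, X′, Y, Y′, Z, Z′ : ℕ → ℂ be sequences all of whose values avoid the set {p₀,…,p_{g−1}} ∪ {q₀,…,q_{g−1}}, and such that for every n = (n₁,n₂,n₃) ∈ ℕ³ the six numbers X_{n₁}, X′_{n₁}, Y_{n₂}, Y′_{n₂}, Z_{n₃}, Z′_{n₃} are pairwise distinct. For f₀, …, f_{g−1} ∈ ℂ define I_{n,k} = f_k · ∏_{m₁=0}^{n₁−1} σ_k(X′_{m₁})/σ_k(X_{m₁}) · ∏_{m₂=0}^{n₂−1} σ_k(Y′_{m₂})/σ_k(Y_{m₂}) · ∏_{m₃=0}^{n₃−1} σ_k(Z′_{m₃})/σ_k(Z_{m₃}), and set τ₁(n) = H((I_{n,k}/σ_k(X_{n₁}))_k), τ₂(n) = H((I_{n,k}/σ_k(Y_{n₂}))_k), τ₃(n) = H((I_{n,k}/σ_k(Z_{n₃}))_k). For each n let r_α, s_α (α = 1,2,3) be given by the corrected cross-ratio formulas with X₁ = X_{n₁}, X′₁ = X′_{n₁}, X₂ = Y_{n₂}, X′₂ = Y′_{n₂}, X₃ = Z_{n₃}, X′₃ = Z′_{n₃}.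 Then for every n ∈ ℕ³ and every cyclic permutation (α,β,γ) of (1,2,3), the trilinear equation r_α τ_α(n+e_β+e_γ) τ_β(n) τ_γ(n) = τ_α(n) τ_β(n+e_γ) τ_γ(n+e_β) + s_β τ_α(n+e_β) τ_β(n+e_γ) τ_γ(n) + s_γ⁻¹ τ_α(n+e_γ) τ_β(n) τ_γ(n+e_β) holds. -/

import Mathlib

/-- The rational limit `H` of the theta function: for amplitudes
`x = (x₀,…,x_{g−1})`,
`H(x) = det((q_j)^i − x_j (p_j)^i) / ∏_{j<i} (q_i − q_j)`. -/
noncomputable def Hdet {g : ℕ} (p q x : Fin g → ℂ) : ℂ :=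
  (Matrix.of fun i j : Fin g => q j ^ (i : ℕ) - x j * p j ^ (i : ℕ)).det /
    ∏ i : Fin g, ∏ j ∈ Finset.Iio i, (q i - q j)

/-- The rational function `σ(z) = (p − z)/(q − z)`. -/
noncomputable def sig (p q z : ℂ) : ℂ := (p - z) / (q - z)

/-- The corrected cross-ratio coefficient `s_α` built from
`X_α, X′_α, X_β, X_γ` (here `a = X_α`, `a' = X′_α`, `b = X_β`, `c = X_γ`). -/
noncomputable def sCoef (a a' b c : ℂ) : ℂ :=
  -((a - c) * (a' - b)) / ((a - b) * (a' - c))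

/-- The corrected cross-ratio coefficient `r_α` built from
`X_α, X_β, X′_β, X_γ, X′_γ` (here `a = X_α`, `b = X_β`, `b' = X′_β`,
`c = X_γ`, `c' = X′_γ`). -/
noncomputable def rCoef (a b b' c c' : ℂ) : ℂ :=
  -((b' - c') * (a - b) * (a - c)) / ((b - c) * (a - b') * (a - c'))

namespace S7
open Matrix

variable {g : ℕ}

def pw (g : ℕ) (u : ℂ) : Fin (g+2) → ℂ := fun i => u ^ (i : ℕ)

def Bord (p q b : Fin g → ℂ) (x y : Fin (g+2) → ℂ) : Matrix (Fin (g+2)) (Fin (g+2)) ℂ :=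
  Matrix.of fun i j =>
    if h : (j : ℕ) < g then q ⟨j, h⟩ ^ (i : ℕ) - b ⟨j, h⟩ * p ⟨j, h⟩ ^ (i : ℕ)
    else if (j : ℕ) = g then x i else y i

def Mm (p q b : Fin g → ℂ) (u v : ℂ) : Matrix (Fin g) (Fin g) ℂ :=
  Matrix.of fun i j =>
    q j ^ (i:ℕ) * ((q j - u) * (q j - v)) - b j * (p j ^ (i:ℕ) * ((p j - u) * (p j - v)))

def re (g : ℕ) : Fin 2 ⊕ Fin g ≃ Fin (g+2) :=
  finSumFinEquiv.trans (finCongr (by omega))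

def ce (g : ℕ) : Fin 2 ⊕ Fin g ≃ Fin (g+2) :=
  (Equiv.sumComm (Fin 2) (Fin g)).trans finSumFinEquiv

lemma re_inl (r : Fin 2) : (re g (Sum.inl r) : ℕ) = r := by
  simp [re, finSumFinEquiv]
lemma re_inr (j : Fin g) : (re g (Sum.inr j) : ℕ) = 2 + j := by
  simp [re, finSumFinEquiv]; omega
lemma ce_inl (r : Fin 2) : (ce g (Sum.inl r) : ℕ) = g + r := by
  simp [ce, finSumFinEquiv]
lemma ce_inr (j : Fin g) : (ce g (Sum.inr j) : ℕ) = j := by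
  simp [ce, finSumFinEquiv]

lemma stepC_main (p q b : Fin g → ℂ) (u v : ℂ) :
    ((Equiv.Perm.sign ((ce g).trans (re g).symm) : ℤ) : ℂ) * (Bord p q b (pw g u) (pw g v)).det
      = (v - u) * (Mm p q b u v).det := by
  classical
  set σp : Equiv.Perm (Fin 2 ⊕ Fin g) := (ce g).trans (re g).symm with hσp
  set A : Matrix (Fin (g+2)) (Fin (g+2)) ℂ := Bord p q b (pw g u) (pw g v) with hA
  set B1 : Matrix (Fin (g+2)) (Fin (g+2)) ℂ := Matrix.of fun i j =>
    A i j - u * (if h : (i:ℕ) = 0 then 0 else A ⟨(i:ℕ)-1, by omega⟩ j) with hB1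
  set B2 : Matrix (Fin (g+2)) (Fin (g+2)) ℂ := Matrix.of fun i j =>
    B1 i j - (if (i:ℕ) ≤ 1 then 0 else v * B1 ⟨(i:ℕ)-1, by have := i.isLt; omega⟩ j) with hB2
  have hAB1 : A.det = B1.det := by
    refine Matrix.det_eq_of_forall_row_eq_smul_add_pred (n := g+1) (fun _ => u) ?_ ?_
    · intro j; simp [hB1]
    · intro i j
      have h1 : ((i.succ : Fin (g+2)) : ℕ) ≠ 0 := by simp [Fin.val_succ]
      have h2 : (⟨((i.succ : Fin (g+2)) : ℕ) - 1, by omega⟩ : Fin (g+2)) = i.castSucc := by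
        simp [Fin.ext_iff, Fin.val_succ]
      simp only [hB1, Matrix.of_apply, h1, dif_neg, not_false_iff, h2]
      ring
  have hB1B2 : B1.det = B2.det := by
    refine Matrix.det_eq_of_forall_row_eq_smul_add_pred (n := g+1)
      (fun i => if (i:ℕ) = 0 then 0 else v) ?_ ?_
    · intro j; simp [hB2]
    · intro i j
      by_cases h0 : (i : ℕ) = 0
    
      · have h1 : ((i.succ : Fin (g+2)) : ℕ) ≤ 1 := by simp [Fin.val_succ, h0]
        simp only [hB2, Matrix.of_apply, if_pos h1, if_pos h0]
        ring
      · have h1 : ¬ ((i.succ : Fin (g+2)) : ℕ) ≤ 1 := by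
          simp only [Fin.val_succ]; omega
        have h2 : (⟨((i.succ : Fin (g+2)) : ℕ) - 1, by have := i.isLt; omega⟩ : Fin (g+2)) = i.castSucc := by
          simp [Fin.ext_iff, Fin.val_succ]
        simp only [hB2, Matrix.of_apply, if_neg h1, if_neg h0, h2]
        ring
  -- entry evaluation lemmas
  have hAG : ∀ (t j : Fin (g+2)), (j:ℕ) = g → A t j = u ^ (t:ℕ) := by
    intro t j hj
    have h1 : ¬ ((j:ℕ) < g) := by omega
    simp [hA, Bord, h1, hj, pw]
  have hAL : ∀ (t j : Fin (g+2)), (j:ℕ) = g+1 → A t j = v ^ (t:ℕ) := by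
    intro t j hj
    have h1 : ¬ ((j:ℕ) < g) := by omega
    have h2 : (j:ℕ) ≠ g := by omega
    simp [hA, Bord, h1, h2, hj, pw]
  have hAW : ∀ (t j : Fin (g+2)) (hj : (j:ℕ) < g),
      A t j = q ⟨(j:ℕ), hj⟩ ^ (t:ℕ) - b ⟨(j:ℕ), hj⟩ * p ⟨(j:ℕ), hj⟩ ^ (t:ℕ) := by
    intro t j hj
    simp [hA, Bord, hj]
  have hE0 : ∀ (t : Fin (g+2)), (t:ℕ) = 0 → ∀ j, B2 t j = A t j := by
    intro t ht j
    have h1 : (t:ℕ) ≤ 1 := by omega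
    simp [hB2, hB1, h1, ht]
    exact fun h => absurd (Fin.ext (by simp [ht])) h
  have hE1 : ∀ (t t0 : Fin (g+2)), (t:ℕ) = 1 → (t0:ℕ) = 0 → ∀ j,
      B2 t j = A t j - u * A t0 j := by
    intro t t0 ht ht0 j
    have h1 : (t:ℕ) ≤ 1 := by omega
    have h2 : (t:ℕ) ≠ 0 := by omega
    have h3 : (⟨(t:ℕ)-1, by omega⟩ : Fin (g+2)) = t0 := by simp [Fin.ext_iff, ht, ht0]
    simp only [hB2, hB1, Matrix.of_apply, if_pos h1, dif_neg h2, h3, sub_zero]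
  have hE2 : ∀ (t t1 t2 : Fin (g+2)), 2 ≤ (t:ℕ) → (t1:ℕ) = (t:ℕ) - 1 → (t2:ℕ) = (t:ℕ) - 2 → ∀ j,
      B2 t j = A t j - u * A t1 j - v * (A t1 j - u * A t2 j) := by
    intro t t1 t2 ht ht1 ht2 j
    have h1 : ¬ ((t:ℕ) ≤ 1) := by omega
    have h2 : (t:ℕ) ≠ 0 := by omega
    have h3 : (⟨(t:ℕ)-1, by have := t.isLt; omega⟩ : Fin (g+2)) = t1 := by simp [Fin.ext_iff, ht1]
    have h6 : (t:ℕ) - 1 ≠ 0 := by omega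
    have h7 : (⟨(t:ℕ)-1-1, by have := t.isLt; omega⟩ : Fin (g+2)) = t2 := by
      simp only [Fin.ext_iff, ht2]; omega
    simp only [hB2, hB1, Matrix.of_apply, if_neg h1, dif_neg h2, dif_neg h6, h3, h7]
  -- block structure of B2 after permuting rows and columns
  have hblocks : B2.submatrix (re g) (ce g)
      = Matrix.fromBlocks !![1, 1; 0, v - u]
          (Matrix.of fun (r : Fin 2) (j : Fin g) => B2 (re g (Sum.inl r)) (ce g (Sum.inr j)))
          0 (Mm p q b u v) := by
    ext rc cc
    match rc, cc with
    | Sum.inl r, Sum.inl c =>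
      simp only [Matrix.submatrix_apply, Matrix.fromBlocks_apply₁₁]
      fin_cases r <;> fin_cases c
      · -- (0,0)
        rw [hE0 _ (by simp [re_inl]) _, hAG _ _ (by simp [ce_inl])]
        norm_num [re_inl]
      · -- (0,1)
        rw [hE0 _ (by simp [re_inl]) _, hAL _ _ (by simp [ce_inl])]
        norm_num [re_inl]
      · -- (1,0)
        rw [hE1 _ (0 : Fin (g+2)) (by simp [re_inl]) (by simp) _,
          hAG _ _ (by simp [ce_inl]), hAG _ _ (by simp [ce_inl])]
        norm_num [re_inl]
      · -- (1,1)
        rw [hE1 _ (0 : Fin (g+2)) (by simp [re_inl]) (by simp) _,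
          hAL _ _ (by simp [ce_inl]), hAL _ _ (by simp [ce_inl])]
        norm_num [re_inl]
    | Sum.inl r, Sum.inr j =>
      simp only [Matrix.submatrix_apply, Matrix.fromBlocks_apply₁₂, Matrix.of_apply]
    | Sum.inr i, Sum.inl c =>
      simp only [Matrix.submatrix_apply, Matrix.fromBlocks_apply₂₁, Matrix.zero_apply]
      have hre : (re g (Sum.inr i) : ℕ) = 2 + (i:ℕ) := re_inr i
      have h2 : 2 ≤ (re g (Sum.inr i) : ℕ) := by omega
      have ht1 : ((⟨1 + (i:ℕ), by have := i.isLt; omega⟩ : Fin (g+2)) : ℕ)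
          = (re g (Sum.inr i) : ℕ) - 1 := by simp [hre]
      have ht2 : ((⟨(i:ℕ), by have := i.isLt; omega⟩ : Fin (g+2)) : ℕ)
          = (re g (Sum.inr i) : ℕ) - 2 := by simp [hre]
      rw [hE2 _ _ _ h2 ht1 ht2]
      fin_cases c
      · rw [hAG _ _ (by simp [ce_inl]), hAG _ _ (by simp [ce_inl]),
          hAG _ _ (by simp [ce_inl])]
        simp only [hre]
        ring
      · rw [hAL _ _ (by simp [ce_inl]), hAL _ _ (by simp [ce_inl]),
          hAL _ _ (by simp [ce_inl])]
        simp only [hre]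
        ring
    | Sum.inr i, Sum.inr j =>
      simp only [Matrix.submatrix_apply, Matrix.fromBlocks_apply₂₂]
      have hre : (re g (Sum.inr i) : ℕ) = 2 + (i:ℕ) := re_inr i
      have h2 : 2 ≤ (re g (Sum.inr i) : ℕ) := by omega
      have ht1 : ((⟨1 + (i:ℕ), by have := i.isLt; omega⟩ : Fin (g+2)) : ℕ)
          = (re g (Sum.inr i) : ℕ) - 1 := by simp [hre]
      have ht2 : ((⟨(i:ℕ), by have := i.isLt; omega⟩ : Fin (g+2)) : ℕ)
          = (re g (Sum.inr i) : ℕ) - 2 := by simp [hre]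
      rw [hE2 _ _ _ h2 ht1 ht2]
      have hcj : ((ce g (Sum.inr j)) : ℕ) < g := by rw [ce_inr]; exact j.isLt
      rw [hAW _ _ hcj, hAW _ _ hcj, hAW _ _ hcj]
      have hj : (⟨((ce g (Sum.inr j)) : ℕ), hcj⟩ : Fin g) = j := by
        simp [Fin.ext_iff, ce_inr]
      rw [hj]
      simp only [hre, Mm, Matrix.of_apply]
      ring
  -- determinant bookkeeping
  have hperm : B2.submatrix (re g) (ce g) = (B2.submatrix (re g) (re g)).submatrix id σp := by
    ext i j
    simp [hσp, Matrix.submatrix_apply]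
  have hdet1 : (B2.submatrix (re g) (ce g)).det
      = ((Equiv.Perm.sign σp : ℤ) : ℂ) * B2.det := by
    rw [hperm, Matrix.det_permute' σp, Matrix.det_submatrix_equiv_self]
  have hdet2 : (B2.submatrix (re g) (ce g)).det = (v - u) * (Mm p q b u v).det := by
    rw [hblocks, Matrix.det_fromBlocks_zero₂₁]
    congr 1
    rw [Matrix.det_fin_two_of]
    ring
  rw [hAB1, hB1B2, ← hdet1, hdet2]
def colG (g : ℕ) : Fin (g+2) := ⟨g, by omega⟩
def colL (g : ℕ) : Fin (g+2) := ⟨g+1, by omega⟩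

lemma updG (p q b : Fin g → ℂ) (x y w : Fin (g+2) → ℂ) :
    (Bord p q b x y).updateCol (colG g) w = Bord p q b w y := by
  ext i j
  rw [Matrix.updateCol_apply]
  by_cases hj : j = colG g
  · subst hj; simp [Bord, colG]
  · have : (j : ℕ) ≠ g := fun h => hj (Fin.ext h)
    simp [Bord, this, hj]

lemma updL (p q b : Fin g → ℂ) (x y w : Fin (g+2) → ℂ) :
    (Bord p q b x y).updateCol (colL g) w = Bord p q b x w := by
  ext i j
  rw [Matrix.updateCol_apply]
  by_cases hj : j = colL g
  · subst hj
    have h1 : ¬ ((colL g : ℕ) < g) := by simp [colL]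
    have h2 : ((colL g : ℕ) ≠ g) := by simp [colL]
    simp [Bord, h1, h2]
  · have hlt : (j : ℕ) < g + 1 := by
      have := j.isLt
      rcases Nat.lt_or_ge (j : ℕ) (g+1) with h | h
      · exact h
      · exact absurd (Fin.ext (by omega : (j:ℕ) = g+1)) hj
    by_cases h2 : (j : ℕ) < g
    · simp [Bord, h2, hj]
    · have h3 : (j : ℕ) = g := by omega
      simp [Bord, h3, hj]

lemma colG_apply (p q b : Fin g → ℂ) (x y : Fin (g+2) → ℂ) :
    (fun i => Bord p q b x y i (colG g)) = x := by
  funext i; simp [Bord, colG]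

lemma colL_apply (p q b : Fin g → ℂ) (x y : Fin (g+2) → ℂ) :
    (fun i => Bord p q b x y i (colL g)) = y := by
  have h1 : ¬ ((colL g : ℕ) < g) := by simp [colL]
  have h2 : ((colL g : ℕ) ≠ g) := by simp [colL]
  funext i; simp [Bord, h1, h2]

lemma det_dup (p q b : Fin g → ℂ) (x : Fin (g+2) → ℂ) (k : Fin (g+2)) (hk : (k : ℕ) < g) :
    (Bord p q b x (fun i => q ⟨k, hk⟩ ^ (i:ℕ) - b ⟨k, hk⟩ * p ⟨k, hk⟩ ^ (i:ℕ))).det = 0 := by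
  apply Matrix.det_zero_of_column_eq (i := k) (j := colL g)
  · exact fun h => by simp [colL, Fin.ext_iff] at h; omega
  · intro r
    have h1 : ¬ ((colL g : ℕ) < g) := by simp [colL]
    have h2 : ((colL g : ℕ) ≠ g) := by simp [colL]
    simp [Bord, colL, hk, h1, h2]

/-- Plücker-type three-term relation for bordered determinants, via Cramer's rule. -/
lemma pluck (p q b : Fin g → ℂ) (x y a c : Fin (g+2) → ℂ) :
    (Bord p q b c a).det * (Bord p q b x y).det
      + (Bord p q b y c).det * (Bord p q b x a).det
    = (Bord p q b y a).det * (Bord p q b x c).det := by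
  classical
  set B := Bord p q b y a with hB
  have hL : ∀ w, (Bord p q b x w).det = Matrix.cramer (Bord p q b x 0) w (colL g) := by
    intro w
    rw [Matrix.cramer_apply, updL]
  have hcr := Matrix.mulVec_cramer B c
  have expand : B *ᵥ (Matrix.cramer B c) = ∑ k, Matrix.cramer B c k • (fun i => B i k) := by
    funext i
    rw [Finset.sum_apply]
    simp only [Pi.smul_apply, smul_eq_mul]
    simp [Matrix.mulVec, dotProduct, mul_comm]
  have key := congrArg (fun w => Matrix.cramer (Bord p q b x 0) w (colL g)) hcr
  simp only [expand] at key
  rw [map_sum] at key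
  simp only [_root_.map_smul] at key
  rw [Finset.sum_apply] at key
  simp only [Pi.smul_apply, smul_eq_mul] at key
  -- RHS of key
  have hRc : Matrix.cramer (Bord p q b x 0) c (colL g) = (Bord p q b x c).det := (hL c).symm
  -- reduce the sum
  set t : Fin (g+2) → ℂ := fun k => Matrix.cramer B c k * Matrix.cramer (Bord p q b x 0) (fun i => B i k) (colL g) with ht
  have hsum : (∑ k, t k) = t (colG g) + t (colL g) := by
    have hGL : colG g ≠ colL g := by simp [colG, colL, Fin.ext_iff]
    have hz : ∀ k ∈ Finset.univ, k ∉ ({colG g, colL g} : Finset (Fin (g+2))) → t k = 0 := by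
      intro k _ hk
      simp only [Finset.mem_insert, Finset.mem_singleton] at hk
      push_neg at hk
      have hkG : (k : ℕ) ≠ g := fun h => hk.1 (Fin.ext h)
      have hkL : (k : ℕ) ≠ g+1 := fun h => hk.2 (Fin.ext h)
      have hklt : (k : ℕ) < g := by have := k.isLt; omega
      have hcol : (fun i => B i k) = (fun i : Fin (g+2) => q ⟨(k:ℕ), hklt⟩ ^ (i:ℕ) - b ⟨(k:ℕ), hklt⟩ * p ⟨(k:ℕ), hklt⟩ ^ (i:ℕ)) := by
        funext i; simp [hB, Bord, hklt]
      simp only [ht]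
      rw [hcol, ← hL, det_dup]
      ring
    rw [← Finset.sum_subset (Finset.subset_univ {colG g, colL g}) hz,
      Finset.sum_pair hGL]
  rw [hsum] at key
  -- evaluate the two surviving terms
  have e1 : t (colG g) = (Bord p q b c a).det * (Bord p q b x y).det := by
    simp only [ht]
    rw [colG_apply, ← hL, Matrix.cramer_apply, hB, updG]
  have e2 : t (colL g) = (Bord p q b y c).det * (Bord p q b x a).det := by
    simp only [ht]
    rw [colL_apply, ← hL, Matrix.cramer_apply, hB, updL]
  rw [e1, e2, hRc] at key
  exact key


lemma stepC (p q b : Fin g → ℂ) :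
    ∃ s : ℂ, s * s = 1 ∧ ∀ u v : ℂ,
      (Bord p q b (pw g u) (pw g v)).det = s * ((v - u) * (Mm p q b u v).det) := by
  rcases Int.units_eq_one_or (Equiv.Perm.sign ((ce g).trans (re g).symm)) with hs | hs
  · refine ⟨1, by norm_num, fun u v => ?_⟩
    have h := stepC_main p q b u v
    rw [hs] at h
    push_cast at h
    linear_combination h
  · refine ⟨-1, by norm_num, fun u v => ?_⟩
    have h := stepC_main p q b u v
    rw [hs] at h
    push_cast at h
    linear_combination -h

/-- rank-2 decomposition of the two-point tau determinant -/
lemma exists_FG (p q b : Fin g → ℂ) :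
    ∃ F G : ℂ → ℂ, ∀ u v : ℂ,
      (v - u) * (Mm p q b u v).det = F u * G v - F v * G u := by
  classical
  obtain ⟨s, hss, hs⟩ := stepC p q b
  set DD : ℂ → ℂ → ℂ := fun u v => (Bord p q b (pw g u) (pw g v)).det with hDD
  have key : ∀ u v : ℂ, (v - u) * (Mm p q b u v).det = s * DD u v := by
    intro u v
    have h := hs u v
    change DD u v = _ at h
    rw [h, ← mul_assoc, hss, one_mul]
  by_cases h0 : ∀ u v : ℂ, DD u v = 0
  · refine ⟨0, 0, fun u v => ?_⟩
    rw [key u v, h0 u v]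
    simp
  · push_neg at h0
    obtain ⟨a₀, b₀, hab⟩ := h0
    have hP : ∀ u v : ℂ, DD a₀ b₀ * DD u v + DD v a₀ * DD u b₀ = DD v b₀ * DD u a₀ :=
      fun u v => pluck p q b (pw g u) (pw g v) (pw g b₀) (pw g a₀)
    refine ⟨fun t => s * DD t a₀ / DD a₀ b₀, fun t => DD t b₀, fun u v => ?_⟩
    rw [key u v]
    have h3 : DD u a₀ * DD v b₀ - DD v a₀ * DD u b₀ = DD a₀ b₀ * DD u v := by
      linear_combination -hP u v
    rw [div_mul_eq_mul_div, div_mul_eq_mul_div, div_sub_div_same, eq_div_iff hab]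
    linear_combination -s * h3

/-- the two-point tau function -/
noncomputable def Qf (p q b : Fin g → ℂ) (u v : ℂ) : ℂ :=
  Hdet p q (fun k => b k * sig (p k) (q k) u * sig (p k) (q k) v)

lemma cancel3 (a b c d A B C : ℂ) (ha : a ≠ 0) (hb : b ≠ 0) (hc : c ≠ 0) (hd : d ≠ 0) :
    (-(a*(b*c))/d) * (A/a) * (B/b) * (C/c) = -(A*(B*C))/d := by
  rw [div_mul_div_comm, div_mul_div_comm, div_mul_div_comm,
    div_eq_div_iff (mul_ne_zero (mul_ne_zero (mul_ne_zero hd ha) hb) hc) hd]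
  ring

lemma quot3 (a b c A B C : ℂ) :
    (A/a) * (B/b) * (C/c) = (A*(B*C))/(a*(b*c)) := by
  rw [div_mul_div_comm, div_mul_div_comm]
  congr 1 <;> ring

lemma master (p q b : Fin g → ℂ)
    (hΔ : (∏ i : Fin g, ∏ j ∈ Finset.Iio i, (q i - q j)) ≠ 0)
    (x y y' z z' : ℂ)
    (hqx : ∀ k, q k - x ≠ 0) (hqy : ∀ k, q k - y ≠ 0) (hqy' : ∀ k, q k - y' ≠ 0)
    (hqz : ∀ k, q k - z ≠ 0) (hqz' : ∀ k, q k - z' ≠ 0)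
    (hxy : x ≠ y) (hxy' : x ≠ y') (hxz : x ≠ z) (hxz' : x ≠ z')
    (hyz : y ≠ z) (hyz' : y ≠ z') (hy'z : y' ≠ z) (hy'z' : y' ≠ z') :
    rCoef x y y' z z' * Qf p q b y' z' * Qf p q b x z * Qf p q b x y
      = Qf p q b y z * Qf p q b x z' * Qf p q b x y'
        + sCoef y y' z x * Qf p q b y' z * Qf p q b x z' * Qf p q b x y
        + (sCoef z z' x y)⁻¹ * Qf p q b y z' * Qf p q b x z * Qf p q b x y' := by
  classical
  obtain ⟨F, G, hFG⟩ := exists_FG p q b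
  have hQ : ∀ u v : ℂ, v - u ≠ 0 → (∀ k, q k - u ≠ 0) → (∀ k, q k - v ≠ 0) →
      Qf p q b u v = (F u * G v - F v * G u)
        / ((v - u) * ((∏ i : Fin g, ∏ j ∈ Finset.Iio i, (q i - q j))
            * ((∏ k, (q k - u)) * (∏ k, (q k - v))))) := by
    intro u v huv hu hv
    have hM : (Mm p q b u v).det
        = ((∏ k, (q k - u)) * (∏ k, (q k - v)))
          * (Matrix.of fun i j : Fin g =>
              q j ^ (i:ℕ) - (b j * sig (p j) (q j) u * sig (p j) (q j) v) * p j ^ (i:ℕ)).det := by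
      have hent : Mm p q b u v = Matrix.of fun i j =>
          ((q j - u) * (q j - v)) * ((Matrix.of fun i j : Fin g =>
            q j ^ (i:ℕ) - (b j * sig (p j) (q j) u * sig (p j) (q j) v) * p j ^ (i:ℕ)) i j) := by
        ext i j
        have h1 : q j - u ≠ 0 := hu j
        have h2 : q j - v ≠ 0 := hv j
        simp only [Mm, Matrix.of_apply, sig]
        field_simp
      rw [hent, Matrix.det_mul_row]
      rw [Finset.prod_mul_distrib]
    have hden : ((v - u) * ((∏ i : Fin g, ∏ j ∈ Finset.Iio i, (q i - q j))
        * ((∏ k, (q k - u)) * (∏ k, (q k - v))))) ≠ 0 := by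
      refine mul_ne_zero huv (mul_ne_zero hΔ (mul_ne_zero ?_ ?_))
      · exact Finset.prod_ne_zero_iff.mpr fun k _ => hu k
      · exact Finset.prod_ne_zero_iff.mpr fun k _ => hv k
    rw [Qf, Hdet, eq_div_iff hden, ← hFG u v, hM]
    field_simp
  -- point-difference nonvanishing
  have d1 : z' - y' ≠ 0 := sub_ne_zero.mpr hy'z'.symm
  have d2 : z - x ≠ 0 := sub_ne_zero.mpr hxz.symm
  have d3 : y - x ≠ 0 := sub_ne_zero.mpr hxy.symm
  have d4 : z - y ≠ 0 := sub_ne_zero.mpr hyz.symm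
  have d5 : z' - x ≠ 0 := sub_ne_zero.mpr hxz'.symm
  have d6 : y' - x ≠ 0 := sub_ne_zero.mpr hxy'.symm
  have d7 : z - y' ≠ 0 := sub_ne_zero.mpr hy'z.symm
  have d8 : z' - y ≠ 0 := sub_ne_zero.mpr hyz'.symm
  rw [hQ y' z' d1 hqy' hqz', hQ x z d2 hqx hqz, hQ x y d3 hqx hqy, hQ y z d4 hqy hqz,
    hQ x z' d5 hqx hqz', hQ x y' d6 hqx hqy', hQ y' z d7 hqy' hqz, hQ y z' d8 hqy hqz']
  set Δ : ℂ := ∏ i : Fin g, ∏ j ∈ Finset.Iio i, (q i - q j) with hΔdef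
  set Px : ℂ := ∏ k, (q k - x) with hPx
  set Py : ℂ := ∏ k, (q k - y) with hPy
  set Py' : ℂ := ∏ k, (q k - y') with hPy'
  set Pz : ℂ := ∏ k, (q k - z) with hPz
  set Pz' : ℂ := ∏ k, (q k - z') with hPz'
  have hPxn : Px ≠ 0 := Finset.prod_ne_zero_iff.mpr fun k _ => hqx k
  have hPyn : Py ≠ 0 := Finset.prod_ne_zero_iff.mpr fun k _ => hqy k
  have hPy'n : Py' ≠ 0 := Finset.prod_ne_zero_iff.mpr fun k _ => hqy' k
  have hPzn : Pz ≠ 0 := Finset.prod_ne_zero_iff.mpr fun k _ => hqz k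
  have hPz'n : Pz' ≠ 0 := Finset.prod_ne_zero_iff.mpr fun k _ => hqz' k
  -- denominators
  have hD1 : (z' - y') * (Δ * (Py' * Pz')) ≠ 0 :=
    mul_ne_zero d1 (mul_ne_zero hΔ (mul_ne_zero hPy'n hPz'n))
  have hD2 : (z - x) * (Δ * (Px * Pz)) ≠ 0 :=
    mul_ne_zero d2 (mul_ne_zero hΔ (mul_ne_zero hPxn hPzn))
  have hD3 : (y - x) * (Δ * (Px * Py)) ≠ 0 :=
    mul_ne_zero d3 (mul_ne_zero hΔ (mul_ne_zero hPxn hPyn))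
  have hD4 : (z - y) * (Δ * (Py * Pz)) ≠ 0 :=
    mul_ne_zero d4 (mul_ne_zero hΔ (mul_ne_zero hPyn hPzn))
  have hD5 : (z' - x) * (Δ * (Px * Pz')) ≠ 0 :=
    mul_ne_zero d5 (mul_ne_zero hΔ (mul_ne_zero hPxn hPz'n))
  have hD6 : (y' - x) * (Δ * (Px * Py')) ≠ 0 :=
    mul_ne_zero d6 (mul_ne_zero hΔ (mul_ne_zero hPxn hPy'n))
  have hD7 : (z - y') * (Δ * (Py' * Pz)) ≠ 0 :=
    mul_ne_zero d7 (mul_ne_zero hΔ (mul_ne_zero hPy'n hPzn))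
  have hD8 : (z' - y) * (Δ * (Py * Pz')) ≠ 0 :=
    mul_ne_zero d8 (mul_ne_zero hΔ (mul_ne_zero hPyn hPz'n))
  set dd : ℂ := ((z - y) * (Δ * (Py * Pz))) * (((z' - x) * (Δ * (Px * Pz'))) * ((y' - x) * (Δ * (Px * Py')))) with hdd_def
  have hdd : dd ≠ 0 := mul_ne_zero hD4 (mul_ne_zero hD5 hD6)
  -- rewrite the coefficients into cancellable form
  have e_r : rCoef x y y' z z'
      = -(((z' - y') * (Δ * (Py' * Pz'))) * (((z - x) * (Δ * (Px * Pz))) * ((y - x) * (Δ * (Px * Py))))) / dd := by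
    rw [rCoef, div_eq_div_iff (by
      exact mul_ne_zero (mul_ne_zero (sub_ne_zero.mpr hyz) (sub_ne_zero.mpr hxy')) (sub_ne_zero.mpr hxz')) hdd]
    rw [hdd_def]
    ring
  have e_s2 : sCoef y y' z x
      = -(((z - y') * (Δ * (Py' * Pz))) * (((z' - x) * (Δ * (Px * Pz'))) * ((y - x) * (Δ * (Px * Py))))) / dd := by
    rw [sCoef, div_eq_div_iff (by
      exact mul_ne_zero (sub_ne_zero.mpr hyz) (sub_ne_zero.mpr hxy'.symm)) hdd]
    rw [hdd_def]
    ring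
  have e_s3 : (sCoef z z' x y)⁻¹
      = -(((z' - y) * (Δ * (Py * Pz'))) * (((z - x) * (Δ * (Px * Pz))) * ((y' - x) * (Δ * (Px * Py'))))) / dd := by
    rw [sCoef, inv_div, div_eq_div_iff (by
      exact neg_ne_zero.mpr (mul_ne_zero d4 d5)) hdd]
    rw [hdd_def]
    ring
  rw [e_r, e_s2, e_s3,
    cancel3 _ _ _ _ _ _ _ hD1 hD2 hD3 hdd,
    cancel3 _ _ _ _ _ _ _ hD7 hD5 hD3 hdd,
    cancel3 _ _ _ _ _ _ _ hD8 hD2 hD6 hdd,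
    quot3, ← hdd_def, ← add_div, ← add_div]
  have hnum : (F y * G z - F z * G y) * ((F x * G z' - F z' * G x) * (F x * G y' - F y' * G x))
      + -((F y' * G z - F z * G y') * ((F x * G z' - F z' * G x) * (F x * G y - F y * G x)))
      + -((F y * G z' - F z' * G y) * ((F x * G z - F z * G x) * (F x * G y' - F y' * G x)))
      = -((F y' * G z' - F z' * G y') * ((F x * G z - F z * G x) * (F x * G y - F y * G x))) := by
    ring
  rw [hnum]

end S7

set_option maxHeartbeats 1600000 in
theorem statement7 (g : ℕ) (hg : 1 ≤ g) (p q : Fin g → ℂ)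
    (hq : ∀ i j : Fin g, i ≠ j → q i ≠ q j)
    (X X' Y Y' Z Z' : ℕ → ℂ) (f : Fin g → ℂ)
    (havoid : ∀ (m : ℕ) (k : Fin g),
      X m ≠ p k ∧ X m ≠ q k ∧ X' m ≠ p k ∧ X' m ≠ q k ∧
      Y m ≠ p k ∧ Y m ≠ q k ∧ Y' m ≠ p k ∧ Y' m ≠ q k ∧
      Z m ≠ p k ∧ Z m ≠ q k ∧ Z' m ≠ p k ∧ Z' m ≠ q k)
    (hdist : ∀ n₁ n₂ n₃ : ℕ,
      ([X n₁, X' n₁, Y n₂, Y' n₂, Z n₃, Z' n₃] : List ℂ).Pairwise (· ≠ ·))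
    (I : ℕ → ℕ → ℕ → Fin g → ℂ)
    (hI : ∀ n₁ n₂ n₃ k, I n₁ n₂ n₃ k =
      f k * (∏ m ∈ Finset.range n₁, sig (p k) (q k) (X' m) / sig (p k) (q k) (X m))
          * (∏ m ∈ Finset.range n₂, sig (p k) (q k) (Y' m) / sig (p k) (q k) (Y m))
          * (∏ m ∈ Finset.range n₃, sig (p k) (q k) (Z' m) / sig (p k) (q k) (Z m)))
    (τ₁ τ₂ τ₃ : ℕ → ℕ → ℕ → ℂ)
    (hτ₁ : ∀ n₁ n₂ n₃, τ₁ n₁ n₂ n₃ =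
      Hdet p q (fun k => I n₁ n₂ n₃ k / sig (p k) (q k) (X n₁)))
    (hτ₂ : ∀ n₁ n₂ n₃, τ₂ n₁ n₂ n₃ =
      Hdet p q (fun k => I n₁ n₂ n₃ k / sig (p k) (q k) (Y n₂)))
    (hτ₃ : ∀ n₁ n₂ n₃, τ₃ n₁ n₂ n₃ =
      Hdet p q (fun k => I n₁ n₂ n₃ k / sig (p k) (q k) (Z n₃))) :
    ∀ n₁ n₂ n₃ : ℕ,
      -- (α,β,γ) = (1,2,3)
      (rCoef (X n₁) (Y n₂) (Y' n₂) (Z n₃) (Z' n₃)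
          * τ₁ n₁ (n₂+1) (n₃+1) * τ₂ n₁ n₂ n₃ * τ₃ n₁ n₂ n₃
        = τ₁ n₁ n₂ n₃ * τ₂ n₁ n₂ (n₃+1) * τ₃ n₁ (n₂+1) n₃
          + sCoef (Y n₂) (Y' n₂) (Z n₃) (X n₁)
            * τ₁ n₁ (n₂+1) n₃ * τ₂ n₁ n₂ (n₃+1) * τ₃ n₁ n₂ n₃
          + (sCoef (Z n₃) (Z' n₃) (X n₁) (Y n₂))⁻¹
            * τ₁ n₁ n₂ (n₃+1) * τ₂ n₁ n₂ n₃ * τ₃ n₁ (n₂+1) n₃) ∧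
      -- (α,β,γ) = (2,3,1)
      (rCoef (Y n₂) (Z n₃) (Z' n₃) (X n₁) (X' n₁)
          * τ₂ (n₁+1) n₂ (n₃+1) * τ₃ n₁ n₂ n₃ * τ₁ n₁ n₂ n₃
        = τ₂ n₁ n₂ n₃ * τ₃ (n₁+1) n₂ n₃ * τ₁ n₁ n₂ (n₃+1)
          + sCoef (Z n₃) (Z' n₃) (X n₁) (Y n₂)
            * τ₂ n₁ n₂ (n₃+1) * τ₃ (n₁+1) n₂ n₃ * τ₁ n₁ n₂ n₃
          + (sCoef (X n₁) (X' n₁) (Y n₂) (Z n₃))⁻¹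
            * τ₂ (n₁+1) n₂ n₃ * τ₃ n₁ n₂ n₃ * τ₁ n₁ n₂ (n₃+1)) ∧
      -- (α,β,γ) = (3,1,2)
      (rCoef (Z n₃) (X n₁) (X' n₁) (Y n₂) (Y' n₂)
          * τ₃ (n₁+1) (n₂+1) n₃ * τ₁ n₁ n₂ n₃ * τ₂ n₁ n₂ n₃
        = τ₃ n₁ n₂ n₃ * τ₁ n₁ (n₂+1) n₃ * τ₂ (n₁+1) n₂ n₃
          + sCoef (X n₁) (X' n₁) (Y n₂) (Z n₃)
            * τ₃ (n₁+1) n₂ n₃ * τ₁ n₁ (n₂+1) n₃ * τ₂ n₁ n₂ n₃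
          + (sCoef (Y n₂) (Y' n₂) (Z n₃) (X n₁))⁻¹
            * τ₃ n₁ (n₂+1) n₃ * τ₁ n₁ n₂ n₃ * τ₂ (n₁+1) n₂ n₃) := by
  classical
  have hΔ : (∏ i : Fin g, ∏ j ∈ Finset.Iio i, (q i - q j)) ≠ 0 := by
    refine Finset.prod_ne_zero_iff.mpr fun i _ => Finset.prod_ne_zero_iff.mpr fun j hj => ?_
    exact sub_ne_zero.mpr (hq i j (Finset.mem_Iio.mp hj).ne')
  intro n₁ n₂ n₃
  have hA1 := fun k => havoid n₁ k
  have hA2 := fun k => havoid n₂ k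
  have hA3 := fun k => havoid n₃ k
  have hqX : ∀ k, q k - X n₁ ≠ 0 := fun k => sub_ne_zero.mpr ((hA1 k).2.1).symm
  have hqX' : ∀ k, q k - X' n₁ ≠ 0 := fun k => sub_ne_zero.mpr ((hA1 k).2.2.2.1).symm
  have hqY : ∀ k, q k - Y n₂ ≠ 0 := fun k => sub_ne_zero.mpr ((hA2 k).2.2.2.2.2.1).symm
  have hqY' : ∀ k, q k - Y' n₂ ≠ 0 := fun k => sub_ne_zero.mpr ((hA2 k).2.2.2.2.2.2.2.1).symm
  have hqZ : ∀ k, q k - Z n₃ ≠ 0 := fun k => sub_ne_zero.mpr ((hA3 k).2.2.2.2.2.2.2.2.2.1).symm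
  have hqZ' : ∀ k, q k - Z' n₃ ≠ 0 := fun k => sub_ne_zero.mpr ((hA3 k).2.2.2.2.2.2.2.2.2.2.2).symm
  have hsX : ∀ k, sig (p k) (q k) (X n₁) ≠ 0 := fun k =>
    div_ne_zero (sub_ne_zero.mpr ((hA1 k).1).symm) (sub_ne_zero.mpr ((hA1 k).2.1).symm)
  have hsY : ∀ k, sig (p k) (q k) (Y n₂) ≠ 0 := fun k =>
    div_ne_zero (sub_ne_zero.mpr ((hA2 k).2.2.2.2.1).symm) (sub_ne_zero.mpr ((hA2 k).2.2.2.2.2.1).symm)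
  have hsZ : ∀ k, sig (p k) (q k) (Z n₃) ≠ 0 := fun k =>
    div_ne_zero (sub_ne_zero.mpr ((hA3 k).2.2.2.2.2.2.2.2.1).symm) (sub_ne_zero.mpr ((hA3 k).2.2.2.2.2.2.2.2.2.1).symm)
  have hd := hdist n₁ n₂ n₃
  simp only [List.pairwise_cons, List.mem_cons, List.mem_singleton, List.not_mem_nil,
    forall_eq_or_imp, forall_eq, and_true] at hd
  obtain ⟨⟨nXX', nXY, nXY', nXZ, nXZ'p⟩, ⟨nX'Y, nX'Y', nX'Z, nX'Z'p⟩, ⟨nYY', nYZ, nYZ'p⟩, ⟨nY'Z, nY'Z'p⟩, -⟩ := hd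
  have nXZ' := nXZ'p.1
  have nX'Z' := nX'Z'p.1
  have nYZ' := nYZ'p.1
  have nY'Z' := nY'Z'p.1
  set bb : Fin g → ℂ := fun k => I n₁ n₂ n₃ k /
    (sig (p k) (q k) (X n₁) * sig (p k) (q k) (Y n₂) * sig (p k) (q k) (Z n₃)) with hbb
  have hRX : ∀ m₂ m₃ k, I (n₁+1) m₂ m₃ k
      = I n₁ m₂ m₃ k * (sig (p k) (q k) (X' n₁) / sig (p k) (q k) (X n₁)) := by
    intro m₂ m₃ k
    rw [hI, hI, Finset.prod_range_succ]
    ring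
  have hRY : ∀ m₁ m₃ k, I m₁ (n₂+1) m₃ k
      = I m₁ n₂ m₃ k * (sig (p k) (q k) (Y' n₂) / sig (p k) (q k) (Y n₂)) := by
    intro m₁ m₃ k
    rw [hI, hI, Finset.prod_range_succ]
    ring
  have hRZ : ∀ m₁ m₂ k, I m₁ m₂ (n₃+1) k
      = I m₁ m₂ n₃ k * (sig (p k) (q k) (Z' n₃) / sig (p k) (q k) (Z n₃)) := by
    intro m₁ m₂ k
    rw [hI, hI, Finset.prod_range_succ]
    ring
  refine ⟨?_, ?_, ?_⟩
  · -- (α,β,γ) = (1,2,3)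
    have e1 : τ₁ n₁ (n₂+1) (n₃+1) = S7.Qf p q bb (Y' n₂) (Z' n₃) := by
      rw [hτ₁]
      unfold S7.Qf
      congr 1
      funext k
      simp only [hbb]
      rw [hRY, hRZ]
      field_simp [hsX k, hsY k, hsZ k]
      try ring
      try simp
    have e2 : τ₂ n₁ n₂ n₃ = S7.Qf p q bb (X n₁) (Z n₃) := by
      rw [hτ₂]
      unfold S7.Qf
      congr 1
      funext k
      simp only [hbb]
      field_simp [hsX k, hsY k, hsZ k]
      try ring
      try simp
    have e3 : τ₃ n₁ n₂ n₃ = S7.Qf p q bb (X n₁) (Y n₂) := by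
      rw [hτ₃]
      unfold S7.Qf
      congr 1
      funext k
      simp only [hbb]
      field_simp [hsX k, hsY k, hsZ k]
      try ring
      try simp
    have e4 : τ₁ n₁ n₂ n₃ = S7.Qf p q bb (Y n₂) (Z n₃) := by
      rw [hτ₁]
      unfold S7.Qf
      congr 1
      funext k
      simp only [hbb]
      field_simp [hsX k, hsY k, hsZ k]
      try ring
      try simp
    have e5 : τ₂ n₁ n₂ (n₃+1) = S7.Qf p q bb (X n₁) (Z' n₃) := by
      rw [hτ₂]
      unfold S7.Qf
      congr 1
      funext k
      simp only [hbb]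
      rw [hRZ]
      field_simp [hsX k, hsY k, hsZ k]
      try ring
      try simp
    have e6 : τ₃ n₁ (n₂+1) n₃ = S7.Qf p q bb (X n₁) (Y' n₂) := by
      rw [hτ₃]
      unfold S7.Qf
      congr 1
      funext k
      simp only [hbb]
      rw [hRY]
      field_simp [hsX k, hsY k, hsZ k]
      try ring
      try simp
    have e7 : τ₁ n₁ (n₂+1) n₃ = S7.Qf p q bb (Y' n₂) (Z n₃) := by
      rw [hτ₁]
      unfold S7.Qf
      congr 1
      funext k
      simp only [hbb]
      rw [hRY]
      field_simp [hsX k, hsY k, hsZ k]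
      try ring
      try simp
    have e8 : τ₁ n₁ n₂ (n₃+1) = S7.Qf p q bb (Y n₂) (Z' n₃) := by
      rw [hτ₁]
      unfold S7.Qf
      congr 1
      funext k
      simp only [hbb]
      rw [hRZ]
      field_simp [hsX k, hsY k, hsZ k]
      try ring
      try simp
    rw [e1, e2, e3, e4, e5, e6, e7, e8]
    exact S7.master p q bb hΔ (X n₁) (Y n₂) (Y' n₂) (Z n₃) (Z' n₃)
      hqX hqY hqY' hqZ hqZ' nXY nXY' nXZ nXZ' nYZ nYZ' nY'Z nY'Z'
  · -- (α,β,γ) = (2,3,1)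
    have e1 : τ₂ (n₁+1) n₂ (n₃+1) = S7.Qf p q bb (Z' n₃) (X' n₁) := by
      rw [hτ₂]
      unfold S7.Qf
      congr 1
      funext k
      simp only [hbb]
      rw [hRX, hRZ]
      field_simp [hsX k, hsY k, hsZ k]
      try ring
      try simp
    have e2 : τ₃ n₁ n₂ n₃ = S7.Qf p q bb (Y n₂) (X n₁) := by
      rw [hτ₃]
      unfold S7.Qf
      congr 1
      funext k
      simp only [hbb]
      field_simp [hsX k, hsY k, hsZ k]
      try ring
      try simp
    have e3 : τ₁ n₁ n₂ n₃ = S7.Qf p q bb (Y n₂) (Z n₃) := by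
      rw [hτ₁]
      unfold S7.Qf
      congr 1
      funext k
      simp only [hbb]
      field_simp [hsX k, hsY k, hsZ k]
      try ring
      try simp
    have e4 : τ₂ n₁ n₂ n₃ = S7.Qf p q bb (Z n₃) (X n₁) := by
      rw [hτ₂]
      unfold S7.Qf
      congr 1
      funext k
      simp only [hbb]
      field_simp [hsX k, hsY k, hsZ k]
      try ring
      try simp
    have e5 : τ₃ (n₁+1) n₂ n₃ = S7.Qf p q bb (Y n₂) (X' n₁) := by
      rw [hτ₃]
      unfold S7.Qf
      congr 1
      funext k
      simp only [hbb]
      rw [hRX]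
      field_simp [hsX k, hsY k, hsZ k]
      try ring
      try simp
    have e6 : τ₁ n₁ n₂ (n₃+1) = S7.Qf p q bb (Y n₂) (Z' n₃) := by
      rw [hτ₁]
      unfold S7.Qf
      congr 1
      funext k
      simp only [hbb]
      rw [hRZ]
      field_simp [hsX k, hsY k, hsZ k]
      try ring
      try simp
    have e7 : τ₂ n₁ n₂ (n₃+1) = S7.Qf p q bb (Z' n₃) (X n₁) := by
      rw [hτ₂]
      unfold S7.Qf
      congr 1
      funext k
      simp only [hbb]
      rw [hRZ]
      field_simp [hsX k, hsY k, hsZ k]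
      try ring
      try simp
    have e8 : τ₂ (n₁+1) n₂ n₃ = S7.Qf p q bb (Z n₃) (X' n₁) := by
      rw [hτ₂]
      unfold S7.Qf
      congr 1
      funext k
      simp only [hbb]
      rw [hRX]
      field_simp [hsX k, hsY k, hsZ k]
      try ring
      try simp
    rw [e1, e2, e3, e4, e5, e6, e7, e8]
    exact S7.master p q bb hΔ (Y n₂) (Z n₃) (Z' n₃) (X n₁) (X' n₁)
      hqY hqZ hqZ' hqX hqX' nYZ nYZ' (Ne.symm nXY) (Ne.symm nX'Y) (Ne.symm nXZ) (Ne.symm nX'Z) (Ne.symm nXZ') (Ne.symm nX'Z')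
  · -- (α,β,γ) = (3,1,2)
    have e1 : τ₃ (n₁+1) (n₂+1) n₃ = S7.Qf p q bb (X' n₁) (Y' n₂) := by
      rw [hτ₃]
      unfold S7.Qf
      congr 1
      funext k
      simp only [hbb]
      rw [hRX, hRY]
      field_simp [hsX k, hsY k, hsZ k]
      try ring
      try simp
    have e2 : τ₁ n₁ n₂ n₃ = S7.Qf p q bb (Z n₃) (Y n₂) := by
      rw [hτ₁]
      unfold S7.Qf
      congr 1
      funext k
      simp only [hbb]
      field_simp [hsX k, hsY k, hsZ k]
      try ring
      try simp
    have e3 : τ₂ n₁ n₂ n₃ = S7.Qf p q bb (Z n₃) (X n₁) := by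
      rw [hτ₂]
      unfold S7.Qf
      congr 1
      funext k
      simp only [hbb]
      field_simp [hsX k, hsY k, hsZ k]
      try ring
      try simp
    have e4 : τ₃ n₁ n₂ n₃ = S7.Qf p q bb (X n₁) (Y n₂) := by
      rw [hτ₃]
      unfold S7.Qf
      congr 1
      funext k
      simp only [hbb]
      field_simp [hsX k, hsY k, hsZ k]
      try ring
      try simp
    have e5 : τ₁ n₁ (n₂+1) n₃ = S7.Qf p q bb (Z n₃) (Y' n₂) := by
      rw [hτ₁]
      unfold S7.Qf
      congr 1
      funext k
      simp only [hbb]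
      rw [hRY]
      field_simp [hsX k, hsY k, hsZ k]
      try ring
      try simp
    have e6 : τ₂ (n₁+1) n₂ n₃ = S7.Qf p q bb (Z n₃) (X' n₁) := by
      rw [hτ₂]
      unfold S7.Qf
      congr 1
      funext k
      simp only [hbb]
      rw [hRX]
      field_simp [hsX k, hsY k, hsZ k]
      try ring
      try simp
    have e7 : τ₃ (n₁+1) n₂ n₃ = S7.Qf p q bb (X' n₁) (Y n₂) := by
      rw [hτ₃]
      unfold S7.Qf
      congr 1
      funext k
      simp only [hbb]
      rw [hRX]
      field_simp [hsX k, hsY k, hsZ k]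
      try ring
      try simp
    have e8 : τ₃ n₁ (n₂+1) n₃ = S7.Qf p q bb (X n₁) (Y' n₂) := by
      rw [hτ₃]
      unfold S7.Qf
      congr 1
      funext k
      simp only [hbb]
      rw [hRY]
      field_simp [hsX k, hsY k, hsZ k]
      try ring
      try simp
    rw [e1, e2, e3, e4, e5, e6, e7, e8]
    exact S7.master p q bb hΔ (Z n₃) (X n₁) (X' n₁) (Y n₂) (Y' n₂)
      hqZ hqX hqX' hqY hqY' (Ne.symm nXZ) (Ne.symm nX'Z) (Ne.symm nYZ) (Ne.symm nY'Z) nXY nXY' nX'Y nX'Y'
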